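/- The map assigning to each C∞-word w its vertical representation (Ψ(w), Ψ(w~)) is injective on C∞. -/

import Mathlib

namespace CInfWords

open scoped Classical

/-- Run-length encoding Δ of a word. -/
def rle : List ℕ → List ℕ
  | [] => []
  | [_] => [1]
  | a :: b :: l =>
    if a = b then
      match rle (b :: l) with
      | [] => [1]
      | c :: r => (c + 1) :: r
    else 1 :: rle (b :: l)

/-- Erase a leading `1`, if any. -/
def trim1 : List ℕ → List ℕ
  | 1 :: l => l
  | l => l

/-- The derivative `D`: the run-length encoding with the first and/or the last
symbol erased when they are equal to `1`. -/
def D (w : List ℕ) : List ℕ := trim1 ((trim1 (rle w).reverse).reverse)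

/-- Words over Σ = {1,2}. -/
def IsWord (w : List ℕ) : Prop := ∀ x ∈ w, x = 1 ∨ x = 2

/-- Words over Σ₀ = {0,1,2}. -/
def IsWord0 (w : List ℕ) : Prop := ∀ x ∈ w, x = 0 ∨ x = 1 ∨ x = 2

/-- Σ₀^{++}: words over Σ₀ that are empty or begin with a nonzero symbol. -/
def Spp (w : List ℕ) : Prop := IsWord0 w ∧ (w = [] ∨ w.headI ≠ 0)

/-- C^∞-words: every iterated derivative is a word over Σ = {1,2}. -/
def Cinf (w : List ℕ) : Prop := ∀ k, IsWord (D^[k] w)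

/-- The height of a C^∞-word: the least k with D^[k] w = ε. -/
noncomputable def height (w : List ℕ) : ℕ := sInf {k | D^[k] w = []}

/-- The root of a C^∞-word of height k > 0: its (k-1)-st derivative. -/
noncomputable def root (w : List ℕ) : List ℕ := D^[height w - 1] w

/-- `v` is a primitive of `w`. -/
def Primitive (v w : List ℕ) : Prop := IsWord v ∧ D v = w

/-- The complement: swap 1's and 2's. -/
def compl (w : List ℕ) : List ℕ := w.map (fun x => 3 - x)

/-- Minimal C^∞-words: every derivative is a shortest primitive of the next one. -/
def Minimal (w : List ℕ) : Prop :=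
  Cinf w ∧ 0 < height w ∧
    ∀ j, j + 2 ≤ height w → ∀ v, Primitive v (D^[j+1] w) → (D^[j] w).length ≤ v.length

/-- Maximal C^∞-words: every derivative is a longest primitive of the next one. -/
def Maximal (w : List ℕ) : Prop :=
  Cinf w ∧ 0 < height w ∧
    ∀ j, j + 2 ≤ height w → ∀ v, Primitive v (D^[j+1] w) → v.length ≤ (D^[j] w).length

def LeftMinimal (w : List ℕ) : Prop := ∃ v, Minimal v ∧ w <+: v
def RightMinimal (w : List ℕ) : Prop := ∃ v, Minimal v ∧ w <:+ v
def LeftMaximal (w : List ℕ) : Prop := ∃ v, Maximal v ∧ w <+: v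
def RightMaximal (w : List ℕ) : Prop := ∃ v, Maximal v ∧ w <:+ v

/-- Single-rooted minimal words. -/
def SRMin (w : List ℕ) : Prop := Minimal w ∧ (root w).length = 1

/-- Double-rooted minimal words. -/
def DRMin (w : List ℕ) : Prop := Minimal w ∧ (root w).length = 2

/-- The left frontier Ψ(w). -/
noncomputable def psi (w : List ℕ) : List ℕ :=
  (List.range (height w)).map fun i =>
    if i = 0 then w.getD 0 0
    else if (D^[i] w).getD 0 0 = 2 ∧ (D^[i-1] w).getD 0 0 ≠ (D^[i-1] w).getD 1 0
      then 0
    else (D^[i] w).getD 0 0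

/-- The single-rooted minimal word with left frontier U (if it exists). -/
noncomputable def srmOf (U : List ℕ) : List ℕ :=
  if h : ∃ w, SRMin w ∧ psi w = U then h.choose else []

/-- The double-rooted minimal word with left frontier U (if it exists). -/
noncomputable def drmOf (U : List ℕ) : List ℕ :=
  if h : ∃ w, DRMin w ∧ psi w = U then h.choose else []

/-- Γs: the right frontier of the single-rooted minimal word with left frontier U. -/
noncomputable def Gs (U : List ℕ) : List ℕ := psi (srmOf U).reverse

/-- Γd: the right frontier of the double-rooted minimal word with left frontier U. -/
noncomputable def Gd (U : List ℕ) : List ℕ := psi (drmOf U).reverse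

/-- Θ = Γs ∘ Γd. -/
noncomputable def Th (U : List ℕ) : List ℕ := Gs (Gd U)

/-- Π = Γd ∘ Γs. -/
noncomputable def Pp (U : List ℕ) : List ℕ := Gd (Gs U)

/-- One step in the graph G: from node U, the edge labeled 1 goes to U·1, the edge
labeled 2 goes to U·2, and the edge labeled 0 goes to Θ(U)·2. -/
noncomputable def step (U : List ℕ) (a : ℕ) : List ℕ :=
  if a = 1 then U ++ [1] else if a = 2 then U ++ [2] else Th U ++ [2]

/-- The endpoint of the path in G starting at the origin ε and labeled by W. -/
noncomputable def pathEnd (W : List ℕ) : List ℕ := W.foldl step []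

/-- W ∈ Σ₀^{++} labels a directed path in G from ε to U. -/
def LabelsPath (W U : List ℕ) : Prop := Spp W ∧ pathEnd W = U

/-- ‖U‖: the number of words in Σ₀^{++} labeling a path in G from ε to U. -/
noncomputable def normG (U : List ℕ) : ℕ := {W | LabelsPath W U}.ncard

/-- |U|: the length of the single-rooted minimal word with left frontier U. -/
noncomputable def len (U : List ℕ) : ℕ := (srmOf U).length

/-- u is the minimal part of w: the first (leftmost-occurring) factor of w that
is a single-rooted minimal word of the same height as w. -/
def IsMinPart (u w : List ℕ) : Prop :=
  ∃ s t, w = s ++ u ++ t ∧ SRMin u ∧ height u = height w ∧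
    ∀ u' s' t', w = s' ++ u' ++ t' → SRMin u' → height u' = height w →
      s.length ≤ s'.length

/- ============ auxiliary lemmas ============ -/

lemma trim1_cons (a : ℕ) (l : List ℕ) : trim1 (a :: l) = if a = 1 then l else a :: l := by
  rcases a with _ | _ | a <;> simp [trim1]

lemma rle_cons_cons_ne {a b : ℕ} (l : List ℕ) (h : a ≠ b) : rle (a::b::l) = 1 :: rle (b::l) := by
  rw [rle]; simp [h]

lemma rle_cons_cons_eq {a b : ℕ} (l : List ℕ) (h : a = b) {c : ℕ} {r : List ℕ}
    (hcr : rle (b::l) = c :: r) : rle (a::b::l) = (c+1)::r := by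
  rw [rle]; simp [h, hcr]

lemma rle_pos : ∀ (w : List ℕ), w ≠ [] → ∃ c r, rle w = (c+1) :: r
  | [], h => absurd rfl h
  | [_], _ => ⟨0, [], rfl⟩
  | a :: b :: l, _ => by
    obtain ⟨c, r, hcr⟩ := rle_pos (b :: l) (by simp)
    by_cases hab : a = b
    · exact ⟨c+1, r, rle_cons_cons_eq l hab hcr⟩
    · exact ⟨0, rle (b::l), by rw [rle_cons_cons_ne l hab]⟩

lemma rle_ne_nil {w : List ℕ} (h : w ≠ []) : rle w ≠ [] := by
  obtain ⟨c, r, h'⟩ := rle_pos w h; simp [h']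

lemma rle_eq_nil {w : List ℕ} : rle w = [] ↔ w = [] := by
  constructor
  · intro h; by_contra hw; exact rle_ne_nil hw h
  · rintro rfl; rfl

lemma rle_eq_singleton {w : List ℕ} (h : rle w = [1]) : ∃ a, w = [a] := by
  rcases w with _ | ⟨a, _ | ⟨b, l⟩⟩
  · simp [rle] at h
  · exact ⟨a, rfl⟩
  · by_cases hab : a = b
    · obtain ⟨c, r, hcr⟩ := rle_pos (b::l) (by simp)
      rw [rle_cons_cons_eq l hab hcr] at h
      simp at h
    · rw [rle_cons_cons_ne l hab] at h
      simp at h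
      exact absurd h (rle_ne_nil (by simp))

lemma rle_eq_pair {w : List ℕ} (h : rle w = [1,1]) : ∃ a b, w = [a,b] ∧ a ≠ b := by
  rcases w with _ | ⟨a, _ | ⟨b, l⟩⟩
  · simp [rle] at h
  · simp [rle] at h
  · by_cases hab : a = b
    · obtain ⟨c, r, hcr⟩ := rle_pos (b::l) (by simp)
      rw [rle_cons_cons_eq l hab hcr] at h
      simp at h
    · rw [rle_cons_cons_ne l hab] at h
      simp at h
      obtain ⟨x, hx⟩ := rle_eq_singleton h
      simp only [List.cons.injEq] at hx
      obtain ⟨rfl, rfl⟩ := hx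
      exact ⟨a, b, rfl, hab⟩


lemma rle_headI_one {a b : ℕ} (l : List ℕ) : (rle (a::b::l)).headI = 1 ↔ a ≠ b := by
  by_cases hab : a = b
  · obtain ⟨c, r, hcr⟩ := rle_pos (b::l) (by simp)
    rw [rle_cons_cons_eq l hab hcr]
    simp [hab]
  · rw [rle_cons_cons_ne l hab]
    simp [hab]

def incLast : List ℕ → List ℕ
  | [] => []
  | [x] => [x+1]
  | x :: l => x :: incLast l

lemma incLast_cons_cons (a b : ℕ) (l : List ℕ) :
    incLast (a :: b :: l) = a :: incLast (b :: l) := rfl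

lemma incLast_concat (m : List ℕ) (x : ℕ) : incLast (m ++ [x]) = m ++ [x+1] := by
  induction m with
  | nil => rfl
  | cons a m ih =>
    cases m with
    | nil => rfl
    | cons c m' =>
      rw [List.cons_append, List.cons_append, incLast_cons_cons, ← List.cons_append, ih]
      rfl

lemma rle_concat : ∀ (m : List ℕ) (a : ℕ), m ≠ [] →
    rle (m ++ [a]) = if m.getLast? = some a then incLast (rle m) else rle m ++ [1]
  | [], _, h => absurd rfl h
  | [b], a, _ => by
    by_cases hba : b = a
    · rw [show ([b] ++ [a]) = b::a::([]:List ℕ) from rfl,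
        rle_cons_cons_eq ([]:List ℕ) hba (show rle [a] = (0+1) :: [] from rfl)]
      simp [hba, incLast]
      rfl
    · rw [show ([b] ++ [a]) = b::a::([]:List ℕ) from rfl, rle_cons_cons_ne _ hba]
      simp [hba]
      rfl
  | b :: c :: t, a, _ => by
    have ih := rle_concat (c :: t) a (by simp)
    obtain ⟨x, r, hx⟩ := rle_pos (c :: t) (by simp)
    have hlast : (b :: c :: t).getLast? = (c :: t).getLast? := by
      rw [List.getLast?_cons_cons]
    have hshape : (b :: c :: t) ++ [a] = b :: c :: (t ++ [a]) := by simp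
    rw [hshape, hlast]
    by_cases hbc : b = c
    · rw [rle_cons_cons_eq t hbc hx]
      by_cases hl : (c::t).getLast? = some a
      · rw [if_pos hl]
        rw [hl, if_pos rfl, hx] at ih
        cases r with
        | nil =>
          have ih' : rle (c :: (t ++ [a])) = (x+1+1) :: [] := by
            rw [show c :: (t ++ [a]) = (c :: t) ++ [a] by simp, ih]; rfl
          rw [rle_cons_cons_eq (t ++ [a]) hbc ih']
          rfl
        | cons y s =>
          have ih' : rle (c :: (t ++ [a])) = (x+1) :: incLast (y :: s) := by
            rw [show c :: (t ++ [a]) = (c :: t) ++ [a] by simp, ih]; rfl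
          rw [rle_cons_cons_eq (t ++ [a]) hbc ih']
          rfl
      · rw [if_neg hl]
        rw [if_neg hl, hx] at ih
        have ih' : rle (c :: (t ++ [a])) = (x+1) :: (r ++ [1]) := by
          rw [show c :: (t ++ [a]) = (c :: t) ++ [a] by simp, ih]; rfl
        rw [rle_cons_cons_eq (t ++ [a]) hbc ih']
        simp
    · rw [rle_cons_cons_ne t hbc]
      have ih' : rle (c :: (t ++ [a])) = rle ((c::t) ++ [a]) := by simp
      rw [rle_cons_cons_ne (t ++ [a]) hbc, ih', ih]
      by_cases hl : (c::t).getLast? = some a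
      · rw [if_pos hl, if_pos hl, hx]
        rfl
      · rw [if_neg hl, if_neg hl]
        simp

lemma rle_reverse : ∀ (w : List ℕ), rle w.reverse = (rle w).reverse
  | [] => rfl
  | [_] => rfl
  | a :: b :: l => by
    have ih := rle_reverse (b :: l)
    have h1 : (a :: b :: l).reverse = (b::l).reverse ++ [a] := by simp
    rw [h1, rle_concat _ a (by simp), ih]
    have hlast : ((b::l).reverse).getLast? = some b := by
      rw [List.getLast?_reverse]; rfl
    rw [hlast]
    obtain ⟨c, r, hx⟩ := rle_pos (b::l) (by simp)
    by_cases hab : a = b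
    · rw [if_pos (by rw [hab]), rle_cons_cons_eq l hab hx, hx]
      rw [show ((c+1) :: r).reverse = r.reverse ++ [c+1] by simp, incLast_concat]
      simp
    · rw [if_neg (by simp; exact fun h => hab h.symm), rle_cons_cons_ne l hab]
      simp


lemma D_eq (w : List ℕ) : D w = trim1 ((trim1 (rle w).reverse).reverse) := rfl

lemma trim1_nil : trim1 ([] : List ℕ) = [] := rfl

lemma length_trim1_le (l : List ℕ) : (trim1 l).length ≤ l.length := by
  cases l with
  | nil => exact le_rfl
  | cons a t => rw [trim1_cons]; split <;> simp

lemma trim1_eq_nil {l : List ℕ} : trim1 l = [] ↔ l = [] ∨ l = [1] := by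
  cases l with
  | nil => simp [trim1_nil]
  | cons a t =>
    rw [trim1_cons]
    by_cases h : a = 1 <;> simp [h]

lemma trim1_eq_one {l : List ℕ} (h : trim1 l = [1]) : l = [1,1] := by
  cases l with
  | nil => simp [trim1_nil] at h
  | cons a t =>
    rw [trim1_cons] at h
    by_cases ha : a = 1
    · rw [if_pos ha] at h; rw [ha, h]
    · rw [if_neg ha] at h; simp at h; exact absurd h.1 ha

lemma trim1_comm (B : List ℕ) :
    trim1 ((trim1 B).reverse) = (trim1 ((trim1 B.reverse).reverse)).reverse := by
  rcases B with _ | ⟨x, t⟩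
  · rfl
  rcases t.eq_nil_or_concat with rfl | ⟨m, y, rfl⟩
  · by_cases hx : x = 1 <;> simp [trim1_cons, hx, trim1_nil]
  · by_cases hx : x = 1 <;> by_cases hy : y = 1 <;>
      simp [trim1_cons, hx, hy, List.reverse_append]

lemma D_reverse (w : List ℕ) : D w.reverse = (D w).reverse := by
  rw [D_eq, D_eq, rle_reverse, List.reverse_reverse, ← trim1_comm]

lemma D_iter_reverse (k : ℕ) (w : List ℕ) : D^[k] w.reverse = (D^[k] w).reverse := by
  induction k generalizing w with
  | zero => rfl
  | succ k ih =>
    rw [Function.iterate_succ_apply, Function.iterate_succ_apply, D_reverse]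
    exact ih (D w)


lemma length_rle_le : ∀ (w : List ℕ), (rle w).length ≤ w.length
  | [] => le_rfl
  | [_] => le_rfl
  | a :: b :: l => by
    have ih := length_rle_le (b :: l)
    by_cases hab : a = b
    · obtain ⟨c, r, hcr⟩ := rle_pos (b::l) (by simp)
      rw [rle_cons_cons_eq l hab hcr]
      rw [hcr] at ih
      simp at ih ⊢
      omega
    · rw [rle_cons_cons_ne l hab]
      simpa using Nat.succ_le_succ ih

lemma rle_replicate : ∀ (w : List ℕ), (rle w).length = w.length →
    rle w = List.replicate w.length 1
  | [], _ => rfl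
  | [_], _ => rfl
  | a :: b :: l, h => by
    by_cases hab : a = b
    · obtain ⟨c, r, hcr⟩ := rle_pos (b::l) (by simp)
      rw [rle_cons_cons_eq l hab hcr] at h
      have h2 := length_rle_le (b :: l)
      rw [hcr] at h2
      simp at h h2
      omega
    · rw [rle_cons_cons_ne l hab] at h ⊢
      simp at h
      rw [rle_replicate (b :: l) h]
      simp [List.replicate_succ]

lemma length_D_lt (w : List ℕ) (h : w ≠ []) : (D w).length < w.length := by
  rw [D_eq]
  have h1 : (trim1 ((trim1 (rle w).reverse).reverse)).length
      ≤ (trim1 (rle w).reverse).length := by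
    calc (trim1 ((trim1 (rle w).reverse).reverse)).length
        ≤ ((trim1 (rle w).reverse).reverse).length := length_trim1_le _
      _ = (trim1 (rle w).reverse).length := by simp
  apply lt_of_le_of_lt h1
  rcases lt_or_eq_of_le (length_rle_le w) with h2 | h2
  · calc (trim1 (rle w).reverse).length ≤ ((rle w).reverse).length := length_trim1_le _
      _ = (rle w).length := by simp
      _ < w.length := h2
  · have h3 := rle_replicate w h2
    obtain ⟨n, hn⟩ : ∃ n, w.length = n + 1 := by
      cases w with
      | nil => exact absurd rfl h
      | cons a t => exact ⟨t.length, by simp⟩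
    rw [h3, hn, List.reverse_replicate, List.replicate_succ, trim1_cons, if_pos rfl]
    simp [hn]

lemma exists_D_iter_nil (w : List ℕ) : ∃ k, D^[k] w = [] := by
  rcases eq_or_ne w [] with rfl | h
  · exact ⟨0, rfl⟩
  · obtain ⟨k, hk⟩ := exists_D_iter_nil (D w)
    exact ⟨k+1, by rw [Function.iterate_succ_apply]; exact hk⟩
termination_by w.length
decreasing_by exact length_D_lt w h

lemma height_spec (w : List ℕ) : D^[height w] w = [] :=
  Nat.sInf_mem (exists_D_iter_nil w)

lemma height_eq_zero_iff {w : List ℕ} : height w = 0 ↔ w = [] := by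
  constructor
  · intro h
    have := height_spec w
    rwa [h, Function.iterate_zero_apply] at this
  · rintro rfl
    exact Nat.sInf_eq_zero.mpr (Or.inl rfl)

lemma height_D {w : List ℕ} (h : w ≠ []) : height w = height (D w) + 1 := by
  have h1 : ∀ k, D^[k+1] w = D^[k] (D w) := fun k => Function.iterate_succ_apply D k w
  apply le_antisymm
  · exact Nat.sInf_le (show D^[height (D w) + 1] w = [] by rw [h1]; exact height_spec (D w))
  · have hm : D^[height w] w = [] := height_spec w
    have h0 : height w ≠ 0 := fun hz => h (height_eq_zero_iff.mp hz)
    obtain ⟨k, hk⟩ := Nat.exists_eq_succ_of_ne_zero h0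
    rw [hk]
    apply Nat.succ_le_succ
    apply Nat.sInf_le
    show D^[k] (D w) = []
    rw [← h1]
    rw [hk] at hm
    exact hm

lemma height_reverse (w : List ℕ) : height w.reverse = height w := by
  have : {k | D^[k] w.reverse = []} = {k | D^[k] w = []} := by
    ext k
    simp [D_iter_reverse]
  rw [height, height, this]

lemma two_le_length {w : List ℕ} (h : 2 ≤ height w) : 2 ≤ w.length := by
  rcases w with _ | ⟨a, _ | ⟨b, t⟩⟩
  · rw [show height ([]:List ℕ) = 0 from height_eq_zero_iff.mpr rfl] at h; omega
  · have h1 : height [a] ≤ 1 := Nat.sInf_le (show D^[1] [a] = [] from rfl)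
    omega
  · simp

lemma D_ne_nil {w : List ℕ} (h : 2 ≤ height w) : D w ≠ [] := by
  intro hD
  have hw : w ≠ [] := fun hw => by rw [height_eq_zero_iff.mpr hw] at h; omega
  have := height_D hw
  rw [hD, height_eq_zero_iff.mpr rfl] at this
  omega

lemma Cinf_D {w : List ℕ} (h : Cinf w) : Cinf (D w) := fun k => by
  rw [← Function.iterate_succ_apply]; exact h (k+1)

lemma Cinf_reverse {w : List ℕ} (h : Cinf w) : Cinf w.reverse := fun k => by
  rw [D_iter_reverse]
  intro x hx
  exact h k x (List.mem_reverse.mp hx)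

lemma word_getD0 {u : List ℕ} (h : IsWord u) (hu : u ≠ []) :
    u.getD 0 0 = 1 ∨ u.getD 0 0 = 2 := by
  cases u with
  | nil => exact absurd rfl hu
  | cons a t => exact h a (by simp)

lemma headI_eq_getD (l : List ℕ) : l.headI = l.getD 0 0 := by cases l <;> rfl


lemma getD_map_range (f : ℕ → ℕ) {n i : ℕ} (h : i < n) :
    (((List.range n).map f).getD i 0) = f i := by
  rw [List.getD_eq_getElem?_getD, List.getElem?_map, List.getElem?_range h]
  rfl

lemma psi_length (w : List ℕ) : (psi w).length = height w := by simp [psi]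

lemma psi_getD_zero {w : List ℕ} (h : 1 ≤ height w) : (psi w).getD 0 0 = w.getD 0 0 := by
  rw [psi, getD_map_range _ h]
  simp

lemma psi_getD_one {w : List ℕ} (h : 2 ≤ height w) :
    (psi w).getD 1 0 =
      if (D w).getD 0 0 = 2 ∧ w.getD 0 0 ≠ w.getD 1 0 then 0 else (D w).getD 0 0 := by
  rw [psi, getD_map_range _ h]
  simp

lemma psi_D (w : List ℕ) (h2 : 2 ≤ height w) (hd0 : (D w).getD 0 0 ≠ 0) :
    psi (D w) = (if (psi w).getD 1 0 = 0 then 2 else (psi w).getD 1 0) :: (psi w).drop 2 := by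
  have hw : w ≠ [] := fun hw => by rw [height_eq_zero_iff.mpr hw] at h2; omega
  have hh : height w = height (D w) + 1 := height_D hw
  obtain ⟨m, hm⟩ : ∃ m, height (D w) = m + 1 := ⟨height (D w) - 1, by omega⟩
  rw [psi_getD_one h2]
  have hc : (if (if (D w).getD 0 0 = 2 ∧ w.getD 0 0 ≠ w.getD 1 0 then 0 else (D w).getD 0 0) = 0
      then 2 else (if (D w).getD 0 0 = 2 ∧ w.getD 0 0 ≠ w.getD 1 0 then 0 else (D w).getD 0 0))
      = (D w).getD 0 0 := by
    by_cases h : (D w).getD 0 0 = 2 ∧ w.getD 0 0 ≠ w.getD 1 0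
    · rw [if_pos h, if_pos rfl, h.1]
    · rw [if_neg h, if_neg hd0]
  rw [hc]
  rw [psi, psi, hh, hm]
  rw [List.range_succ_eq_map, List.range_succ_eq_map, List.range_succ_eq_map]
  simp only [List.map_cons, List.map_map, List.drop_succ_cons, List.drop_zero]
  congr 1


lemma struct (B : List ℕ) (hd : trim1 ((trim1 B.reverse).reverse) ≠ []) :
    B = (if B.headI = 1 then [1] else []) ++ trim1 ((trim1 B.reverse).reverse)
        ++ (if B.getLast? = some 1 then [1] else [])
      ∧ (B.headI ≠ 1 → (trim1 ((trim1 B.reverse).reverse)).headI ≠ 1) := by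
  obtain ⟨A, hA⟩ : ∃ A, (trim1 B.reverse).reverse = A := ⟨_, rfl⟩
  rw [hA] at hd ⊢
  have hstep : B = A ++ (if B.getLast? = some 1 then [1] else []) ∧ A ≠ [] := by
    rcases B.eq_nil_or_concat with rfl | ⟨m, y, hBm⟩
    · rw [show A = [] from hA ▸ rfl] at hd
      exact absurd rfl hd
    · rw [List.concat_eq_append] at hBm
      subst hBm
      by_cases hy : y = 1
      · subst hy
        have hAm : A = m := by
          rw [← hA, List.reverse_append, List.reverse_singleton]
          rw [show ([1] : List ℕ) ++ m.reverse = 1 :: m.reverse by simp]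
          rw [trim1_cons, if_pos rfl, List.reverse_reverse]
        refine ⟨by rw [hAm, List.getLast?_concat, if_pos rfl], ?_⟩
        rw [hAm]
        rintro rfl
        apply hd
        rw [← hA]
        rfl
      · have hAm : A = m ++ [y] := by
          rw [← hA, List.reverse_append, List.reverse_singleton]
          rw [show ([y] : List ℕ) ++ m.reverse = y :: m.reverse by simp]
          rw [trim1_cons, if_neg hy]
          simp
        refine ⟨?_, by rw [hAm]; simp⟩
        rw [hAm, List.getLast?_concat, if_neg (by simpa using hy)]
        simp
  obtain ⟨hB, hAne⟩ := hstep
  have hhead : B.headI = A.headI := by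
    rw [hB]
    cases A with
    | nil => exact absurd rfl hAne
    | cons a t => simp
  obtain ⟨a, t, rfl⟩ : ∃ a t, A = a :: t := by
    rcases A with _ | ⟨a, t⟩
    · exact absurd rfl hAne
    · exact ⟨a, t, rfl⟩
  by_cases ha : a = 1
  · subst ha
    rw [trim1_cons, if_pos rfl]
    have hB1 : B.headI = 1 := by rw [hhead]; rfl
    constructor
    · rw [if_pos hB1]
      conv_lhs => rw [hB]
      simp
    · exact fun hne => absurd hB1 hne
  · rw [trim1_cons, if_neg ha]
    have hB1 : ¬ B.headI = 1 := by rw [hhead]; simpa using ha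
    constructor
    · rw [if_neg hB1]
      conv_lhs => rw [hB]
      simp
    · exact fun _ => by simpa using ha

lemma det (w : List ℕ) (hc : Cinf w) (h2 : 2 ≤ height w) :
    ((rle w).headI = 1 ↔ ((psi w).getD 1 0 = 0 ∨ (D w).getD 0 0 = 1)) := by
  have hlen : 2 ≤ w.length := two_le_length h2
  obtain ⟨a, b, t, rfl⟩ : ∃ a b t, w = a :: b :: t := by
    rcases w with _ | ⟨a, _ | ⟨b, t⟩⟩
    · simp at hlen
    · simp at hlen
    · exact ⟨a, b, t, rfl⟩
  set w := a :: b :: t with hwdef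
  have hne : D w ≠ [] := D_ne_nil h2
  have hw1 : IsWord (D w) := by simpa using hc 1
  have hd12 := word_getD0 hw1 hne
  have hhead : (rle w).headI = 1 ↔ a ≠ b := rle_headI_one t
  have hpsi1 := psi_getD_one h2
  have hg0 : w.getD 0 0 = a := rfl
  have hg1 : w.getD 1 0 = b := rfl
  rw [hg0, hg1] at hpsi1
  rcases hd12 with h1 | h1
  · constructor
    · intro _
      right
      exact h1
    · intro _
      rw [hhead]
      have hs := struct (rle w) (by rw [← D_eq]; exact hne)
      rw [← D_eq] at hs
      by_contra hab
      have hne1 : (rle w).headI ≠ 1 := fun hh => (hhead.mp hh) hab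
      exact hs.2 hne1 (by rw [headI_eq_getD]; exact h1)
  · rw [h1] at hpsi1
    simp only [true_and] at hpsi1
    constructor
    · intro hh
      left
      rw [hpsi1, if_pos (hhead.mp hh)]
    · rintro (h0 | h0)
      · rw [hpsi1] at h0
        by_cases hab : a ≠ b
        · exact hhead.mpr hab
        · rw [if_neg hab] at h0
          simp at h0
      · rw [h1] at h0
        simp at h0


lemma rle_decomp (w : List ℕ) (hc : Cinf w) (h2 : 2 ≤ height w) :
    rle w = (if (psi w).getD 1 0 = 0 ∨ (D w).getD 0 0 = 1 then [1] else [])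
      ++ D w ++ (if (psi w.reverse).getD 1 0 = 0 ∨ ((D w).reverse).getD 0 0 = 1
                 then [1] else []) := by
  have hne : D w ≠ [] := D_ne_nil h2
  have hwne : w ≠ [] := fun hw => by rw [height_eq_zero_iff.mpr hw] at h2; omega
  have hs := struct (rle w) (by rw [← D_eq]; exact hne)
  rw [← D_eq] at hs
  have e1 : ((rle w).headI = 1 ↔ ((psi w).getD 1 0 = 0 ∨ (D w).getD 0 0 = 1)) := det w hc h2
  have e2 := det w.reverse (Cinf_reverse hc) (by rw [height_reverse]; exact h2)
  rw [D_reverse, rle_reverse] at e2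
  have hlast : ((rle w).getLast? = some 1 ↔ ((rle w).reverse).headI = 1) := by
    rcases (rle w).eq_nil_or_concat with h | ⟨m, y, hBm⟩
    · exact absurd h (rle_ne_nil hwne)
    · rw [List.concat_eq_append] at hBm
      rw [hBm, List.getLast?_concat, List.reverse_append]
      simp
  have c1 : (if (rle w).headI = 1 then ([1]:List ℕ) else [])
      = (if (psi w).getD 1 0 = 0 ∨ (D w).getD 0 0 = 1 then ([1]:List ℕ) else []) :=
    if_congr e1 rfl rfl
  have c2 : (if (rle w).getLast? = some 1 then ([1]:List ℕ) else [])
      = (if (psi w.reverse).getD 1 0 = 0 ∨ ((D w).reverse).getD 0 0 = 1 then ([1]:List ℕ) else []) :=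
    if_congr (hlast.trans e2) rfl rfl
  rw [hs.1, c1, c2]

lemma rle_inj : ∀ (w v : List ℕ), IsWord w → IsWord v → w.headI = v.headI →
    rle w = rle v → w = v
  | [], [], _, _, _, _ => rfl
  | [], c :: s, _, _, _, h => absurd h.symm (rle_ne_nil (by simp))
  | a :: t, [], _, _, _, h => absurd h (rle_ne_nil (by simp))
  | [a], [c], _, _, hh, _ => by simpa using hh
  | [a], c :: d :: s, _, _, _, h => by
    obtain ⟨x, hx⟩ := rle_eq_singleton (w := c :: d :: s) h.symm
    simp at hx
  | a :: b :: t, [c], _, _, _, h => by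
    obtain ⟨x, hx⟩ := rle_eq_singleton (w := a :: b :: t) h
    simp at hx
  | a :: b :: t, c :: d :: s, hw, hv, hh, h => by
    have hac : a = c := by simpa using hh
    subst hac
    obtain ⟨x, r, hx⟩ := rle_pos (b::t) (by simp)
    obtain ⟨y, s', hy⟩ := rle_pos (d::s) (by simp)
    by_cases hab : a = b <;> by_cases had : a = d
    · rw [rle_cons_cons_eq t hab hx, rle_cons_cons_eq s had hy] at h
      simp only [List.cons.injEq] at h
      have hbd : b = d := by rw [← hab, ← had]
      have := rle_inj (b::t) (d::s) (fun x hx => hw x (by simp [hx]))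
        (fun x hx => hv x (by simp [hx])) (by simp [hbd])
        (by rw [hx, hy, h.2]; congr 1; omega)
      rw [this]
    · rw [rle_cons_cons_eq t hab hx, rle_cons_cons_ne s had] at h
      simp at h
    · rw [rle_cons_cons_ne t hab, rle_cons_cons_eq s had hy] at h
      simp at h
    · rw [rle_cons_cons_ne t hab, rle_cons_cons_ne s had] at h
      simp only [List.cons.injEq, true_and] at h
      have hb : b = 1 ∨ b = 2 := hw b (by simp)
      have hd : d = 1 ∨ d = 2 := hv d (by simp)
      have ha : a = 1 ∨ a = 2 := hw a (by simp)
      have hbd : b = d := by omega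
      have := rle_inj (b::t) (d::s) (fun x hx => hw x (by simp [hx]))
        (fun x hx => hv x (by simp [hx])) (by simp [hbd]) h
      rw [this]

lemma height_one (w : List ℕ) (hc : IsWord w) (h : height w = 1) :
    w = [1] ∨ w = [2] ∨ w = [1,2] ∨ w = [2,1] := by
  have hw : w ≠ [] := fun hw => by rw [height_eq_zero_iff.mpr hw] at h; omega
  have hD : D w = [] := by
    have := height_spec w
    rwa [h, Function.iterate_one] at this
  have hB : rle w = [1] ∨ rle w = [1,1] := by
    have h1 : trim1 ((trim1 (rle w).reverse).reverse) = [] := by rw [← D_eq]; exact hD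
    rcases trim1_eq_nil.mp h1 with h2 | h2
    · left
      rw [List.reverse_eq_nil_iff] at h2
      rcases trim1_eq_nil.mp h2 with h3 | h3
      · exact absurd (by rwa [List.reverse_eq_nil_iff] at h3) (rle_ne_nil hw)
      · rw [← List.reverse_reverse (rle w), h3]
        rfl
    · right
      have h3 : trim1 ((rle w).reverse) = [1] := by
        rw [← List.reverse_reverse (trim1 (rle w).reverse), h2]
        rfl
      have h4 := trim1_eq_one h3
      rw [← List.reverse_reverse (rle w), h4]
      rfl
  rcases hB with hB | hB
  · obtain ⟨a, rfl⟩ := rle_eq_singleton hB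
    rcases hc a (by simp) with rfl | rfl
    · exact Or.inl rfl
    · exact Or.inr (Or.inl rfl)
  · obtain ⟨a, b, rfl, hab⟩ := rle_eq_pair hB
    rcases hc a (by simp) with rfl | rfl <;> rcases hc b (by simp) with rfl | rfl
    · exact absurd rfl hab
    · exact Or.inr (Or.inr (Or.inl rfl))
    · exact Or.inr (Or.inr (Or.inr rfl))
    · exact absurd rfl hab


lemma main : ∀ (n : ℕ) (w v : List ℕ), Cinf w → Cinf v → height w = n →
    psi w = psi v → psi w.reverse = psi v.reverse → w = v := by
  intro n
  induction n using Nat.strong_induction_on with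
  | _ n ih =>
    intro w v hw hv hn hp hq
    have hhv : height v = n := by
      have := congrArg List.length hp
      rw [psi_length, psi_length, hn] at this
      exact this.symm
    rcases n with _ | n
    · rw [height_eq_zero_iff.mp hn, height_eq_zero_iff.mp hhv]
    rcases n with _ | m
    ·
      have h4w := height_one w (by simpa using hw 0) hn
      have h4v := height_one v (by simpa using hv 0) hhv
      have e0 : w.headI = v.headI := by
        rw [headI_eq_getD, headI_eq_getD]
        have := congrArg (fun l : List ℕ => l.getD 0 0) hp
        rwa [psi_getD_zero hn.ge, psi_getD_zero hhv.ge] at this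
      have e1 : w.reverse.headI = v.reverse.headI := by
        rw [headI_eq_getD, headI_eq_getD]
        have := congrArg (fun l : List ℕ => l.getD 0 0) hq
        rwa [psi_getD_zero (by rw [height_reverse]; exact hn.ge),
          psi_getD_zero (by rw [height_reverse]; exact hhv.ge)] at this
      clear hp hq hn hhv ih hw hv
      rcases h4w with rfl | rfl | rfl | rfl <;> rcases h4v with rfl | rfl | rfl | rfl <;>
        simp_all
    ·
      have h2w : 2 ≤ height w := by rw [hn]; omega
      have h2v : 2 ≤ height v := by rw [hhv]; omega
      have hwne : w ≠ [] := fun h => by rw [height_eq_zero_iff.mpr h] at hn; omega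
      have hvne : v ≠ [] := fun h => by rw [height_eq_zero_iff.mpr h] at hhv; omega
      have hDwne : D w ≠ [] := D_ne_nil h2w
      have hDvne : D v ≠ [] := D_ne_nil h2v
      have hd0w : (D w).getD 0 0 ≠ 0 := by
        rcases word_getD0 (by simpa using hw 1) hDwne with h | h <;> omega
      have hd0v : (D v).getD 0 0 ≠ 0 := by
        rcases word_getD0 (by simpa using hv 1) hDvne with h | h <;> omega
      have hWw1 : IsWord (D w) := by simpa using hw 1
      have hWv1 : IsWord (D v) := by simpa using hv 1
      have hd0wr : (D w.reverse).getD 0 0 ≠ 0 := by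
        rw [D_reverse]
        rcases word_getD0 (u := (D w).reverse)
          (fun x hx => hWw1 x (List.mem_reverse.mp hx)) (by simpa using hDwne) with h | h <;> omega
      have hd0vr : (D v.reverse).getD 0 0 ≠ 0 := by
        rw [D_reverse]
        rcases word_getD0 (u := (D v).reverse)
          (fun x hx => hWv1 x (List.mem_reverse.mp hx)) (by simpa using hDvne) with h | h <;> omega
      have hDD : D w = D v := by
        apply ih (m+1) (by omega) (D w) (D v) (Cinf_D hw) (Cinf_D hv)
        · have := height_D hwne
          omega
        · rw [psi_D w h2w hd0w, psi_D v h2v hd0v, hp]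
        · rw [← D_reverse, ← D_reverse,
            psi_D w.reverse (by rw [height_reverse]; exact h2w) hd0wr,
            psi_D v.reverse (by rw [height_reverse]; exact h2v) hd0vr, hq]
      have hr : rle w = rle v := by
        rw [rle_decomp w hw h2w, rle_decomp v hv h2v, hp, hq, hDD]
      apply rle_inj w v (by simpa using hw 0) (by simpa using hv 0) ?_ hr
      rw [headI_eq_getD, headI_eq_getD]
      have := congrArg (fun l : List ℕ => l.getD 0 0) hp
      rwa [psi_getD_zero (by omega), psi_getD_zero (by omega)] at this



/-- the vertical representation w ↦ (Ψ(w), Ψ(w~)) is injective on C∞. -/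
theorem vertical_injective :
    Set.InjOn (fun w : List ℕ => (psi w, psi w.reverse)) {w | Cinf w} := by
  intro w hw v hv h
  simp only [Prod.mk.injEq] at h
  exact main (height w) w v hw hv rfl h.1 h.2

end CInfWords
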